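/- For every σ ∈ S_n, Σ_{w ∈ R(σ)} d_B^{G(σ)}(w) = Σ_{i ∈ Des(σ)} Σ_{u ∈ R(σ·s_i)} d_B^{G(σ·s_i)}(u) + 2·Σ_{i : i, i+1 ∈ Des(σ)} |R(σ·s_i·s_{i+1}·s_i)|, where on the right-hand side d_B^{G(σ·s_i)}(u) is the braid degree of u computed in the graph G(σ·s_i). -/

import Mathlib

namespace RW

/-- The simple transposition `s i = (i, i+1)`, acting on `ℕ` (points are `1, …, n`;
the point `0` is unused, matching the paper's 1-indexed conventions). -/
def s (i : ℕ) : Equiv.Perm ℕ := Equiv.swap i (i + 1)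

/-- The product `s i₁ * s i₂ * ⋯ * s iₗ` of the word `w = [i₁, …, iₗ]`. -/
def π (w : List ℕ) : Equiv.Perm ℕ := (w.map s).prod

/-- The copy of the symmetric group `S_n` inside `Equiv.Perm ℕ`: permutations of
`{1, …, n}`, i.e. fixing `0` and every point `> n`. -/
def Sn (n : ℕ) : Set (Equiv.Perm ℕ) := {σ | ∀ m : ℕ, (m = 0 ∨ n < m) → σ m = m}

/-- The length `ℓ(σ)`: the number of inversions of `σ`. -/
noncomputable def len (σ : Equiv.Perm ℕ) : ℕ :=
  Nat.card {p : ℕ × ℕ // p.1 < p.2 ∧ σ p.2 < σ p.1}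

/-- `w` is a reduced word for `σ`: its product is `σ` and its length is `ℓ(σ)`. -/
def Reduced (σ : Equiv.Perm ℕ) (w : List ℕ) : Prop :=
  π w = σ ∧ w.length = len σ

/-- `R σ`: the set of reduced words of `σ`. -/
def R (σ : Equiv.Perm ℕ) : Set (List ℕ) := {w | Reduced σ w}

/-- The descent set `Des σ = {i ≥ 1 | σ(i) > σ(i+1)}`. -/
def Des (σ : Equiv.Perm ℕ) : Set ℕ := {i | 1 ≤ i ∧ σ (i + 1) < σ i}

/-- A single commutation move: swap two adjacent letters `a, b` with `|a - b| > 1`. -/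
def CommMove (w w' : List ℕ) : Prop :=
  ∃ u v : List ℕ, ∃ a b : ℕ, 1 < ((a : ℤ) - (b : ℤ)).natAbs ∧
    w = u ++ a :: b :: v ∧ w' = u ++ b :: a :: v

/-- A single braid move: replace consecutive letters `(a, a+1, a)` by `(a+1, a, a+1)`
or vice versa. -/
def BraidMove (w w' : List ℕ) : Prop :=
  ∃ u v : List ℕ, ∃ a : ℕ,
    (w = u ++ a :: (a+1) :: a :: v ∧ w' = u ++ (a+1) :: a :: (a+1) :: v) ∨
    (w = u ++ (a+1) :: a :: (a+1) :: v ∧ w' = u ++ a :: (a+1) :: a :: v)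

/-- The braid degree of a word: the number of words obtainable from it by a single
braid move.  (For `w ∈ R σ` these are exactly the braid-edge neighbours of `w` in
`G(σ)`, since a braid move sends reduced words of `σ` to reduced words of `σ`.) -/
noncomputable def dB (w : List ℕ) : ℕ := Nat.card {w' : List ℕ // BraidMove w w'}

/-- The commutation degree of a word: the number of words obtainable from it by a
single commutation move. -/
noncomputable def dC (w : List ℕ) : ℕ := Nat.card {w' : List ℕ // CommMove w w'}

/-- The number `|B(σ)|` of braid classes: classes of `R σ` under the equivalence
generated by single braid moves. -/
noncomputable def nB (σ : Equiv.Perm ℕ) : ℕ :=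
  Nat.card (Quot (fun w w' : R σ => BraidMove w.1 w'.1))

/-- The number `|C(σ)|` of commutation classes. -/
noncomputable def nC (σ : Equiv.Perm ℕ) : ℕ :=
  Nat.card (Quot (fun w w' : R σ => CommMove w.1 w'.1))

/-- The underlying function of `w₀^{(k,i)}`: reverse the interval `{i, …, i+k-1}`. -/
def w0fun (k i : ℕ) : ℕ → ℕ := fun m => if i ≤ m ∧ m < i + k then i + (i + k - 1) - m else m

theorem w0fun_involutive (k i : ℕ) : Function.Involutive (w0fun k i) := by
  intro m
  unfold w0fun
  split_ifs <;> omega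

/-- `w₀^{(k,i)}`: the permutation fixing every point outside `{i, …, i+k-1}` and
reversing that interval. -/
def w0 (k i : ℕ) : Equiv.Perm ℕ := (w0fun_involutive k i).toPerm

/-- Right weak order: `τ ≤ σ` iff `ℓ(τ) + ℓ(τ⁻¹σ) = ℓ(σ)`. -/
def wle (τ σ : Equiv.Perm ℕ) : Prop := len τ + len (τ⁻¹ * σ) = len σ

/-- The support of `σ`: the letters appearing in some reduced word of `σ`. -/
def supp (σ : Equiv.Perm ℕ) : Set ℕ := {a | ∃ w, Reduced σ w ∧ a ∈ w}

-- helpers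
lemma s_apply (i m : ℕ) : s i m = if m = i then i + 1 else if m = i + 1 then i else m := by
  simp [s, Equiv.swap_apply_def]

lemma s_mul_s (i : ℕ) : s i * s i = 1 := Equiv.swap_mul_self _ _

lemma π_nil : π [] = 1 := rfl
lemma π_concat (w : List ℕ) (a : ℕ) : π (w ++ [a]) = π w * s a := by
  simp [π]

def InvSet (σ : Equiv.Perm ℕ) : Set (ℕ × ℕ) := {p | p.1 < p.2 ∧ σ p.2 < σ p.1}
def FinInv (σ : Equiv.Perm ℕ) : Prop := (InvSet σ).Finite

lemma len_eq (σ : Equiv.Perm ℕ) : len σ = (InvSet σ).ncard :=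
  Nat.card_coe_set_eq _

def G (i : ℕ) : ℕ × ℕ → ℕ × ℕ := fun p => (s i p.1, s i p.2)

lemma s_s (i m : ℕ) : s i (s i m) = m := by simp [s]

lemma G_G (i : ℕ) (p : ℕ × ℕ) : G i (G i p) = p := by
  simp [G, s_s]

lemma G_inj (i : ℕ) : Function.Injective (G i) :=
  Function.LeftInverse.injective (g := G i) (G_G i)

lemma keyA {σ : Equiv.Perm ℕ} {i : ℕ} (h : σ i < σ (i + 1)) :
    InvSet (σ * s i) = insert (i, i + 1) (G i '' InvSet σ) := by
  ext ⟨p, q⟩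
  simp only [InvSet, Set.mem_setOf_eq, Set.mem_insert_iff, Set.mem_image, Equiv.Perm.mul_apply]
  constructor
  · rintro ⟨hpq, hlt⟩
    by_cases hpi : (p, q) = (i, i + 1)
    · exact Or.inl hpi
    · refine Or.inr ⟨(s i p, s i q), ⟨?_, ?_⟩, ?_⟩
      · -- s i p < s i q
        have : ¬ (p = i ∧ q = i + 1) := by
          intro ⟨h1, h2⟩; exact hpi (by simp [h1, h2])
        simp only [s_apply]; split_ifs <;> omega
      · simpa [s_apply] using hlt
      · simp [G, s_s]
  · rintro (hpq | ⟨⟨x, y⟩, ⟨hxy, hlt⟩, hG⟩)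
    · obtain ⟨h1, h2⟩ := Prod.mk.injEq .. ▸ hpq
      subst h1; subst h2
      refine ⟨by omega, ?_⟩
      simpa [s_apply] using h
    · -- (p,q) = G i (x,y)
      have hx : p = s i x := by
        have := congrArg Prod.fst hG; simpa [G] using this.symm
      have hy : q = s i y := by
        have := congrArg Prod.snd hG; simpa [G] using this.symm
      subst hx; subst hy
      have hxyne : ¬ (x = i ∧ y = i + 1) := by
        rintro ⟨h1, h2⟩; subst h1; subst h2
        exact absurd hlt (not_lt.2 h.le)
      constructor
      · simp only [s_apply]; split_ifs <;> omega
      · simpa [s] using hlt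

lemma finInv_mul {σ : Equiv.Perm ℕ} {i : ℕ} (hf : FinInv σ) : FinInv (σ * s i) := by
  rcases lt_trichotomy (σ i) (σ (i + 1)) with h | h | h
  · rw [FinInv, keyA h]
    exact ((hf.image _).insert _)
  · exact absurd (σ.injective h) (by omega)
  · -- σ (i+1) < σ i : apply keyA to σ' = σ * s i
    set σ' := σ * s i with hσ'
    have h' : σ' i < σ' (i + 1) := by
      simpa [hσ', Equiv.Perm.mul_apply, s_apply] using h
    have hkey := keyA h'
    have hσ'' : σ' * s i = σ := by
      rw [hσ', mul_assoc, s_mul_s, mul_one]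
    rw [hσ''] at hkey
    have himg : (G i '' InvSet σ').Finite := by
      have : G i '' InvSet σ' ⊆ InvSet σ := by rw [hkey]; exact Set.subset_insert _ _
      exact hf.subset this
    have : InvSet σ' = G i '' (G i '' InvSet σ') := by
      rw [Set.image_image]; simp [G_G]
    rw [FinInv, this]
    exact himg.image _

lemma lenA {σ : Equiv.Perm ℕ} {i : ℕ} (hf : FinInv σ) (h : σ i < σ (i + 1)) :
    len (σ * s i) = len σ + 1 := by
  rw [len_eq, len_eq, keyA h]
  have hnm : (i, i + 1) ∉ G i '' InvSet σ := by
    rintro ⟨⟨x, y⟩, hxy, hG⟩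
    have := G_inj i (a₁ := (x, y)) (a₂ := (i + 1, i)) (by rw [hG]; simp [G, s_apply])
    rw [this] at hxy
    exact absurd hxy.1 (by omega)
  rw [Set.ncard_insert_of_notMem hnm (hf.image _), Set.ncard_image_of_injective _ (G_inj i)]

lemma lenB {σ : Equiv.Perm ℕ} {i : ℕ} (hf : FinInv σ) (h : σ (i + 1) < σ i) :
    len σ = len (σ * s i) + 1 := by
  have h' : (σ * s i) i < (σ * s i) (i + 1) := by
    simpa [Equiv.Perm.mul_apply, s_apply] using h
  have := lenA (finInv_mul hf) h'
  rwa [mul_assoc, s_mul_s, mul_one] at this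

lemma finInv_one : FinInv 1 := by
  have : InvSet 1 = ∅ := by
    ext ⟨p, q⟩; simp [InvSet]; omega
  rw [FinInv, this]; exact Set.finite_empty

lemma len_one : len 1 = 0 := by
  rw [len_eq]
  have : InvSet 1 = ∅ := by
    ext ⟨p, q⟩; simp [InvSet]; omega
  simp [this]

lemma len_le (w : List ℕ) : FinInv (π w) ∧ len (π w) ≤ w.length := by
  induction w using List.reverseRecOn with
  | nil => exact ⟨finInv_one, by simp [π_nil, len_one]⟩
  | append_singleton u a ih =>
    obtain ⟨hf, hle⟩ := ih
    rw [π_concat]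
    refine ⟨finInv_mul hf, ?_⟩
    rcases lt_trichotomy (π u a) (π u (a + 1)) with h | h | h
    · rw [lenA hf h]; simpa using hle
    · exact absurd ((π u).injective h) (by omega)
    · have := lenB hf h
      simp only [List.length_append, List.length_singleton]
      omega

/-- Peeling the last letter off a reduced word. -/
lemma peel {σ : Equiv.Perm ℕ} {u : List ℕ} {i : ℕ}
    (hf : FinInv σ) (hw : Reduced σ (u ++ [i])) :
    σ (i + 1) < σ i ∧ Reduced (σ * s i) u := by
  obtain ⟨hπ, hlen⟩ := hw
  rw [π_concat] at hπ
  have hπu : π u = σ * s i := by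
    rw [← hπ, mul_assoc, s_mul_s, mul_one]
  have hlen' : u.length + 1 = len σ := by simpa using hlen
  obtain ⟨hfu, hleu⟩ := len_le u
  rw [hπu] at hfu hleu
  have hgt : σ (i + 1) < σ i := by
    rcases lt_trichotomy (σ i) (σ (i + 1)) with h | h | h
    · have := lenA hf h; omega
    · exact absurd (σ.injective h) (by omega)
    · exact h
  have hlb := lenB hf hgt
  exact ⟨hgt, hπu, by omega⟩

lemma peel_pos {σ : Equiv.Perm ℕ} {i : ℕ} (h0 : σ 0 = 0) (hgt : σ (i + 1) < σ i) :
    1 ≤ i := by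
  rcases Nat.eq_zero_or_pos i with rfl | h1
  · rw [h0] at hgt; omega
  · exact h1

lemma des_bound {σ : Equiv.Perm ℕ} {N i : ℕ} (hb : ∀ m, N ≤ m → σ m = m)
    (hgt : σ (i + 1) < σ i) : i + 2 ≤ N := by
  by_contra hiN
  push_neg at hiN
  rcases Nat.lt_or_ge i N with hi | hi
  · have h2' : σ (i + 1) = i + 1 := hb _ (by omega)
    have hgt' : N ≤ σ i := by omega
    have := σ.injective (hb _ hgt')
    omega
  · have h1' : σ i = i := hb _ hi
    have h2' : σ (i + 1) = i + 1 := hb _ (by omega)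
    omega

/-- Appending a descent letter to a reduced word. -/
lemma appd {σ : Equiv.Perm ℕ} {u : List ℕ} {i : ℕ}
    (hf : FinInv σ) (hd : σ (i + 1) < σ i) (hu : Reduced (σ * s i) u) :
    Reduced σ (u ++ [i]) := by
  obtain ⟨hπ, hlen⟩ := hu
  refine ⟨by rw [π_concat, hπ, mul_assoc, s_mul_s, mul_one], ?_⟩
  have := lenB hf hd
  simp only [List.length_append, List.length_singleton]
  omega

/-- A bound on the support gives finiteness of the inversion set. -/
lemma finInv_of_bound {σ : Equiv.Perm ℕ} {N : ℕ} (hb : ∀ m, N ≤ m → σ m = m) :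
    FinInv σ := by
  have hsub : InvSet σ ⊆ Set.Iio N ×ˢ Set.Iio N := by
    intro x hx
    obtain ⟨p, q⟩ := x
    simp only [InvSet, Set.mem_setOf_eq] at hx
    obtain ⟨hpq, hlt⟩ := hx
    have hq : q < N := by
      by_contra hq
      push_neg at hq
      rw [hb q hq] at hlt
      have hσp : N ≤ σ p := by omega
      have := hb (σ p) hσp
      have hp := σ.injective this
      omega
    exact ⟨show p < N by omega, show q < N from hq⟩
  exact ((Set.finite_Iio N).prod (Set.finite_Iio N)).subset hsub

lemma bound_mul_s {σ : Equiv.Perm ℕ} {N : ℕ} (hb : ∀ m, N ≤ m → σ m = m) (i : ℕ)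
    (hi : i + 2 ≤ N) : ∀ m, N ≤ m → (σ * s i) m = m := by
  intro m hm
  rw [Equiv.Perm.mul_apply, s_apply]
  rw [if_neg (by omega), if_neg (by omega)]
  exact hb m hm

/-- Letters of reduced words are bounded by any support bound. -/
lemma letters_lt {N : ℕ} : ∀ k (σ : Equiv.Perm ℕ), len σ = k →
    (∀ m, N ≤ m → σ m = m) → ∀ w, Reduced σ w → ∀ a ∈ w, a < N := by
  intro k
  induction k using Nat.strong_induction_on with
  | _ k ih =>
    intro σ hk hb w hw a ha
    rcases w.eq_nil_or_concat with rfl | ⟨u, i, rfl⟩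
    · simp at ha
    · simp only [List.concat_eq_append] at hw ha
      have hf : FinInv σ := finInv_of_bound hb
      obtain ⟨hgt, hu⟩ := peel hf hw
      have hiN : i + 2 ≤ N := des_bound hb hgt
      have hiN' : i < N := by omega
      rw [List.mem_append] at ha
      rcases ha with ha | ha
      · have hlb := lenB hf hgt
        have hb' := bound_mul_s hb i hiN
        exact ih (len (σ * s i)) (by omega) _ rfl hb' u hu a ha
      · simp at ha
        omega

lemma finite_lists (k N : ℕ) : {l : List ℕ | l.length = k ∧ ∀ a ∈ l, a < N}.Finite := by
  induction k with
  | zero =>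
    apply Set.Finite.subset (Set.finite_singleton ([] : List ℕ))
    rintro l ⟨hl, -⟩
    simp [List.length_eq_zero_iff.1 hl]
  | succ k ih =>
    apply Set.Finite.subset (((Set.finite_Iio N).prod ih).image (fun p : ℕ × List ℕ => p.1 :: p.2))
    rintro l ⟨hl, hb⟩
    rcases l with _ | ⟨a, t⟩
    · simp at hl
    · refine ⟨(a, t), ⟨?_, ?_, ?_⟩, rfl⟩
      · exact hb a (by simp)
      · simpa using hl
      · exact fun x hx => hb x (by simp [hx])

lemma R_finite {σ : Equiv.Perm ℕ} {N : ℕ} (hb : ∀ m, N ≤ m → σ m = m) :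
    (R σ).Finite := by
  apply Set.Finite.subset (finite_lists (len σ) N)
  intro w hw
  exact ⟨hw.2, letters_lt (len σ) σ rfl hb w hw⟩

lemma braid_rel (a : ℕ) : s (a + 1) * s a * s (a + 1) = s a * s (a + 1) * s a := by
  ext m
  simp only [Equiv.Perm.mul_apply, s_apply]
  split_ifs <;> omega

lemma foldr_max_bound {w : List ℕ} {a : ℕ} (ha : a ∈ w) : a ≤ w.foldr max 0 := by
  induction w with
  | nil => simp at ha
  | cons b t ih =>
    rcases List.mem_cons.1 ha with rfl | ha
    · simp only [List.foldr_cons]; exact le_max_left _ _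
    · simp only [List.foldr_cons]; exact le_trans (ih ha) (le_max_right _ _)

def NB (w : List ℕ) : Set (List ℕ) := {w' | BraidMove w w'}

lemma dB_eq (w : List ℕ) : dB w = (NB w).ncard := Nat.card_coe_set_eq _

lemma braidMove_length {w w' : List ℕ} (h : BraidMove w w') : w'.length = w.length := by
  obtain ⟨u, v, a, (⟨h1, h2⟩ | ⟨h1, h2⟩)⟩ := h <;> subst h1 <;> subst h2 <;> simp

lemma braidMove_mem {w w' : List ℕ} (h : BraidMove w w') : ∀ x ∈ w', x ∈ w := by
  obtain ⟨u, v, a, (⟨h1, h2⟩ | ⟨h1, h2⟩)⟩ := h <;> subst h1 <;> subst h2 <;>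
    intro x hx <;> simp at hx ⊢ <;> tauto

lemma NB_finite (w : List ℕ) : (NB w).Finite := by
  apply Set.Finite.subset (finite_lists w.length (w.foldr max 0 + 1))
  intro w' hw'
  refine ⟨braidMove_length hw', fun a ha => ?_⟩
  have := foldr_max_bound (braidMove_mem hw' a ha)
  omega

/-- Decomposition of braid moves on `u ++ [i]`. -/
lemma braid_concat {u : List ℕ} {i : ℕ} {w' : List ℕ} :
    BraidMove (u ++ [i]) w' ↔
      (∃ u', BraidMove u u' ∧ w' = u' ++ [i]) ∨
      (∃ v, u = v ++ [i, i + 1] ∧ w' = v ++ [i + 1, i, i + 1]) ∨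
      (∃ v a, a + 1 = i ∧ u = v ++ [i, a] ∧ w' = v ++ [a, i, a]) := by
  constructor
  · rintro ⟨p, q, a, (⟨h1, h2⟩ | ⟨h1, h2⟩)⟩
    · rcases q.eq_nil_or_concat with rfl | ⟨q', b, rfl⟩
      · -- suffix case, pattern (a, a+1, a), so i = a
        have h1' : u ++ [i] = (p ++ [a, a + 1]) ++ [a] := by simpa using h1
        obtain ⟨hu, hi⟩ := List.append_inj' h1' rfl
        have hia : i = a := by simpa using hi
        subst hia
        exact Or.inr (Or.inl ⟨p, by simpa using hu, by simpa using h2⟩)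
      · have h1' : u ++ [i] = (p ++ a :: (a+1) :: a :: q') ++ [b] := by
          simpa using h1
        obtain ⟨hu, hi⟩ := List.append_inj' h1' rfl
        have hib : i = b := by simpa using hi
        subst hib
        refine Or.inl ⟨p ++ (a+1) :: a :: (a+1) :: q', ⟨p, q', a, Or.inl ⟨hu, rfl⟩⟩, ?_⟩
        rw [h2]; simp
    · rcases q.eq_nil_or_concat with rfl | ⟨q', b, rfl⟩
      · have h1' : u ++ [i] = (p ++ [a + 1, a]) ++ [a + 1] := by simpa using h1
        obtain ⟨hu, hi⟩ := List.append_inj' h1' rfl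
        have hia : i = a + 1 := by simpa using hi
        subst hia
        refine Or.inr (Or.inr ⟨p, a, rfl, by simpa using hu, by simpa using h2⟩)
      · have h1' : u ++ [i] = (p ++ (a+1) :: a :: (a+1) :: q') ++ [b] := by
          simpa using h1
        obtain ⟨hu, hi⟩ := List.append_inj' h1' rfl
        have hib : i = b := by simpa using hi
        subst hib
        refine Or.inl ⟨p ++ a :: (a+1) :: a :: q', ⟨p, q', a, Or.inr ⟨hu, rfl⟩⟩, ?_⟩
        rw [h2]; simp
  · rintro (⟨u', ⟨p, q, a, (⟨h1, h2⟩ | ⟨h1, h2⟩)⟩, rfl⟩ | ⟨v, h1, h2⟩ | ⟨v, a, ha, h1, h2⟩)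
    · exact ⟨p, q ++ [i], a, Or.inl ⟨by rw [h1]; simp, by rw [h2]; simp⟩⟩
    · exact ⟨p, q ++ [i], a, Or.inr ⟨by rw [h1]; simp, by rw [h2]; simp⟩⟩
    · exact ⟨v, [], i, Or.inl ⟨by simp [h1], by simp [h2]⟩⟩
    · subst ha
      exact ⟨v, [], a, Or.inr ⟨by simp [h1], by simp [h2]⟩⟩

lemma dB_nil : dB [] = 0 := by
  rw [dB_eq]
  have h : NB ([] : List ℕ) = ∅ := by
    ext w'
    simp only [NB, Set.mem_setOf_eq, Set.mem_empty_iff_false, iff_false]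
    rintro ⟨p, q, a, (⟨h1, -⟩ | ⟨h1, -⟩)⟩ <;> exact absurd (congrArg List.length h1) (by simp)
  simp [h]

lemma concat_inj {u v : List ℕ} {i j : ℕ} (h : u ++ [i] = v ++ [j]) : u = v ∧ i = j := by
  obtain ⟨h1, h2⟩ := List.append_inj' h rfl
  exact ⟨h1, by simpa using h2⟩

lemma concat2_inj {u v : List ℕ} {i j i' j' : ℕ} (h : u ++ [i, j] = v ++ [i', j']) :
    u = v ∧ i = i' ∧ j = j' := by
  obtain ⟨h1, h2⟩ := List.append_inj' h rfl
  refine ⟨h1, ?_, ?_⟩ <;> simp_all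

lemma dB_concat_of_not {u : List ℕ} {i : ℕ}
    (h1 : ¬ ∃ v, u = v ++ [i, i + 1]) (h2 : ¬ ∃ v a, a + 1 = i ∧ u = v ++ [i, a]) :
    dB (u ++ [i]) = dB u := by
  have hNB : NB (u ++ [i]) = (fun l => l ++ [i]) '' NB u := by
    ext w'
    simp only [NB, Set.mem_setOf_eq, Set.mem_image]
    rw [braid_concat]
    constructor
    · rintro (⟨u', h, rfl⟩ | ⟨v, hv, -⟩ | ⟨v, a, ha, hv, -⟩)
      · exact ⟨u', h, rfl⟩
      · exact absurd ⟨v, hv⟩ h1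
      · exact absurd ⟨v, a, ha, hv⟩ h2
    · rintro ⟨u', h, rfl⟩
      exact Or.inl ⟨u', h, rfl⟩
  rw [dB_eq, dB_eq, hNB, Set.ncard_image_of_injective _ (List.append_left_injective _)]

lemma dB_concat_succ {u v : List ℕ} {i : ℕ} (h : u = v ++ [i, i + 1]) :
    dB (u ++ [i]) = dB u + 1 := by
  have hNB : NB (u ++ [i]) = insert (v ++ [i + 1, i, i + 1]) ((fun l => l ++ [i]) '' NB u) := by
    ext w'
    simp only [NB, Set.mem_setOf_eq, Set.mem_insert_iff, Set.mem_image]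
    rw [braid_concat]
    constructor
    · rintro (⟨u', h', rfl⟩ | ⟨v', h1, h2⟩ | ⟨v', a, ha, h1, h2⟩)
      · exact Or.inr ⟨u', h', rfl⟩
      · obtain ⟨rfl, -, -⟩ := concat2_inj (h1.symm.trans h)
        exact Or.inl h2
      · obtain ⟨rfl, -, hai⟩ := concat2_inj (h1.symm.trans h)
        omega
    · rintro (rfl | ⟨u', h', rfl⟩)
      · exact Or.inr (Or.inl ⟨v, h, rfl⟩)
      · exact Or.inl ⟨u', h', rfl⟩
  have hnm : v ++ [i + 1, i, i + 1] ∉ (fun l => l ++ [i]) '' NB u := by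
    rintro ⟨u', -, hu'⟩
    have : (v ++ [i + 1, i]) ++ [i + 1] = u' ++ [i] := by
      rw [show u' ++ [i] = v ++ [i + 1, i, i + 1] from hu']; simp
    obtain ⟨-, h2⟩ := concat_inj this
    omega
  rw [dB_eq, dB_eq, hNB, Set.ncard_insert_of_notMem hnm ((NB_finite u).image _),
    Set.ncard_image_of_injective _ (List.append_left_injective _)]

lemma dB_concat_pred {u v : List ℕ} {i a : ℕ} (ha : a + 1 = i) (h : u = v ++ [i, a]) :
    dB (u ++ [i]) = dB u + 1 := by
  have hNB : NB (u ++ [i]) = insert (v ++ [a, i, a]) ((fun l => l ++ [i]) '' NB u) := by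
    ext w'
    simp only [NB, Set.mem_setOf_eq, Set.mem_insert_iff, Set.mem_image]
    rw [braid_concat]
    constructor
    · rintro (⟨u', h', rfl⟩ | ⟨v', h1, h2⟩ | ⟨v', a', ha', h1, h2⟩)
      · exact Or.inr ⟨u', h', rfl⟩
      · obtain ⟨rfl, -, hai⟩ := concat2_inj (h1.symm.trans h)
        omega
      · obtain ⟨rfl, -, rfl⟩ := concat2_inj (h1.symm.trans h)
        exact Or.inl h2
    · rintro (rfl | ⟨u', h', rfl⟩)
      · exact Or.inr (Or.inr ⟨v, a, ha, h, rfl⟩)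
      · exact Or.inl ⟨u', h', rfl⟩
  have hnm : v ++ [a, i, a] ∉ (fun l => l ++ [i]) '' NB u := by
    rintro ⟨u', -, hu'⟩
    have : (v ++ [a, i]) ++ [a] = u' ++ [i] := by
      rw [show u' ++ [i] = v ++ [a, i, a] from hu']; simp
    obtain ⟨-, h2⟩ := concat_inj this
    omega
  rw [dB_eq, dB_eq, hNB, Set.ncard_insert_of_notMem hnm ((NB_finite u).image _),
    Set.ncard_image_of_injective _ (List.append_left_injective _)]

/-- recursion for the total braid degree:
`Σ_{w ∈ R σ} d_B^{G(σ)}(w) = Σ_{i ∈ Des σ} Σ_{u ∈ R(σ s_i)} d_B^{G(σ s_i)}(u)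
+ 2 Σ_{i, i+1 ∈ Des σ} |R(σ s_i s_{i+1} s_i)|`.  (A braid move sends reduced words
of `τ` to reduced words of `τ`, so `dB` computes the braid degree both in `G(σ)`
and in each `G(σ s_i)`.) -/
theorem statement_3 (n : ℕ) (σ : Equiv.Perm ℕ) (hσ : σ ∈ Sn n) :
    ∑ᶠ w ∈ R σ, dB w =
      (∑ᶠ i ∈ Des σ, ∑ᶠ u ∈ R (σ * s i), dB u) +
      2 * ∑ᶠ i ∈ {i : ℕ | i ∈ Des σ ∧ i + 1 ∈ Des σ},
            Nat.card (R (σ * s i * s (i + 1) * s i)) := by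
  classical
  have h0 : σ 0 = 0 := hσ 0 (Or.inl rfl)
  have hb : ∀ m, n + 1 ≤ m → σ m = m := fun m hm => hσ m (Or.inr (by omega))
  have hfσ : FinInv σ := finInv_of_bound hb
  by_cases hone : σ = 1
  · subst hone
    have hR1 : R (1 : Equiv.Perm ℕ) = {[]} := by
      ext w
      simp only [R, Set.mem_setOf_eq, Set.mem_singleton_iff, Reduced, len_one]
      constructor
      · rintro ⟨-, h⟩; exact List.length_eq_zero_iff.1 h
      · rintro rfl; exact ⟨rfl, rfl⟩
    have hDes : Des (1 : Equiv.Perm ℕ) = ∅ := by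
      ext i; simp [Des]
    have hpair : {i : ℕ | i ∈ Des (1 : Equiv.Perm ℕ) ∧ i + 1 ∈ Des (1 : Equiv.Perm ℕ)} = ∅ := by
      rw [hDes]; simp
    rw [hR1, hpair, hDes, finsum_mem_singleton, dB_nil, finsum_mem_empty, finsum_mem_empty]
    simp
  -- main case
  have hRfin : (R σ).Finite := R_finite hb
  have hbS : ∀ i : ℕ, ∀ m, n + i + 2 ≤ m → (σ * s i) m = m := by
    intro i
    exact bound_mul_s (fun m hm => hb m (by omega)) i (by omega)
  have hRiFin : ∀ i : ℕ, (R (σ * s i)).Finite := fun i => R_finite (hbS i)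
  have hbτ : ∀ i : ℕ, ∀ m, n + i + 4 ≤ m → (σ * s i * s (i + 1) * s i) m = m := by
    intro i
    have b0 : ∀ m, n + i + 4 ≤ m → σ m = m := fun m hm => hb m (by omega)
    have b1 := bound_mul_s b0 i (by omega)
    have b2 := bound_mul_s b1 (i + 1) (by omega)
    exact bound_mul_s b2 i (by omega)
  have hRτFin : ∀ i : ℕ, (R (σ * s i * s (i + 1) * s i)).Finite := fun i => R_finite (hbτ i)
  have hDfin : (Des σ).Finite := by
    apply (Set.finite_Iio (n + 1)).subset
    rintro i ⟨-, hgt⟩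
    have := des_bound hb hgt
    exact Set.mem_Iio.2 (by omega)
  have hPfin : {i : ℕ | i ∈ Des σ ∧ i + 1 ∈ Des σ}.Finite :=
    hDfin.subset fun i hi => hi.1
  -- convert all finsums to finset sums
  rw [finsum_mem_eq_finite_toFinset_sum _ hRfin, finsum_mem_eq_finite_toFinset_sum _ hDfin,
    finsum_mem_eq_finite_toFinset_sum _ hPfin]
  rw [Finset.sum_congr rfl (fun i _ => finsum_mem_eq_finite_toFinset_sum (fun u => dB u) (hRiFin i))]
  rw [Finset.sum_congr rfl (fun i _ =>
    (Nat.card_coe_set_eq _).trans (Set.ncard_eq_toFinset_card _ (hRτFin i)))]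
  set D := hDfin.toFinset with hD
  set Pr := hPfin.toFinset with hPr
  have hmemD : ∀ i, i ∈ D ↔ (1 ≤ i ∧ σ (i + 1) < σ i) := by
    intro i
    rw [hD, Set.Finite.mem_toFinset]
    exact Iff.rfl
  have hmemPr : ∀ i, i ∈ Pr ↔ (i ∈ Des σ ∧ i + 1 ∈ Des σ) := by
    intro i
    rw [hPr, Set.Finite.mem_toFinset]
    exact Iff.rfl
  -- Step A : partition of R σ by last letter
  have hpart : hRfin.toFinset =
      D.biUnion (fun i => ((hRiFin i).toFinset).image (fun u => u ++ [i])) := by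
    ext w
    simp only [Set.Finite.mem_toFinset, Finset.mem_biUnion, Finset.mem_image]
    constructor
    · intro hw
      rcases w.eq_nil_or_concat with rfl | ⟨u, i, rfl⟩
      · exact absurd (π_nil.symm.trans hw.1).symm hone
      · simp only [List.concat_eq_append] at hw ⊢
        obtain ⟨hgt, hu⟩ := peel hfσ hw
        exact ⟨i, (hmemD i).2 ⟨peel_pos h0 hgt, hgt⟩, u, hu, rfl⟩
    · rintro ⟨i, hi, u, hu, rfl⟩
      obtain ⟨-, hgt⟩ := (hmemD i).1 hi
      exact appd hfσ hgt hu
  have hdisj : (↑D : Set ℕ).PairwiseDisjoint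
      (fun i => ((hRiFin i).toFinset).image (fun u => u ++ [i])) := by
    rintro i - j - hij
    simp only [Function.onFun]
    rw [Finset.disjoint_left]
    rintro x hx hx'
    simp only [Finset.mem_image] at hx hx'
    obtain ⟨u, -, rfl⟩ := hx
    obtain ⟨u', -, h⟩ := hx'
    exact hij (concat_inj h).2.symm
  rw [hpart, Finset.sum_biUnion hdisj]
  rw [Finset.sum_congr rfl (fun i _ =>
    Finset.sum_image (fun x _ y _ h => (concat_inj h).1))]
  -- Step B : split each dB (u ++ [i])
  have hsplit : ∀ i, ∑ u ∈ (hRiFin i).toFinset, dB (u ++ [i]) =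
      (∑ u ∈ (hRiFin i).toFinset, dB u)
      + (((hRiFin i).toFinset.filter (fun u => ∃ v, u = v ++ [i, i + 1])).card
      + ((hRiFin i).toFinset.filter (fun u => ∃ v a, a + 1 = i ∧ u = v ++ [i, a])).card) := by
    intro i
    have hpt : ∀ u ∈ (hRiFin i).toFinset, dB (u ++ [i]) =
        dB u + ((if ∃ v, u = v ++ [i, i + 1] then 1 else 0)
          + (if ∃ v a, a + 1 = i ∧ u = v ++ [i, a] then 1 else 0)) := by
      intro u _
      by_cases hp1 : ∃ v, u = v ++ [i, i + 1]
      · obtain ⟨v, hv⟩ := hp1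
        have hp2 : ¬ ∃ v a, a + 1 = i ∧ u = v ++ [i, a] := by
          rintro ⟨v', a, ha, hv'⟩
          obtain ⟨-, -, h3⟩ := concat2_inj (hv.symm.trans hv')
          omega
        rw [dB_concat_succ hv, if_pos ⟨v, hv⟩, if_neg hp2]
        all_goals omega
      · by_cases hp2 : ∃ v a, a + 1 = i ∧ u = v ++ [i, a]
        · obtain ⟨v, a, ha, hv⟩ := hp2
          rw [dB_concat_pred ha hv, if_neg hp1, if_pos ⟨v, a, ha, hv⟩]
          all_goals omega
        · rw [dB_concat_of_not hp1 hp2, if_neg hp1, if_neg hp2]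
          all_goals omega
    rw [Finset.sum_congr rfl hpt, Finset.sum_add_distrib, Finset.sum_add_distrib]
    congr 1
    · congr 1 <;> simp [Finset.sum_boole]
  rw [Finset.sum_congr rfl (fun i _ => hsplit i), Finset.sum_add_distrib,
    Finset.sum_add_distrib]
  -- Step C1 : count of reduced words of σ s_i ending in [i, i+1]
  have hcount1 : ∀ i ∈ D, ((hRiFin i).toFinset.filter (fun u => ∃ v, u = v ++ [i, i + 1])).card
      = if i + 1 ∈ Des σ then (hRτFin i).toFinset.card else 0 := by
    intro i hiD
    obtain ⟨h1i, hgti⟩ := (hmemD i).1 hiD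
    have e1 : (σ * s i) (i + 1) = σ i := by
      simp only [Equiv.Perm.mul_apply, s_apply]
      split_ifs <;> first | rfl | omega | (congr 1; omega)
    have e2 : (σ * s i) (i + 1 + 1) = σ (i + 1 + 1) := by
      simp only [Equiv.Perm.mul_apply, s_apply]
      split_ifs <;> first | rfl | omega | (congr 1; omega)
    have e3 : (σ * s i * s (i + 1)) (i + 1) = σ (i + 1 + 1) := by
      simp only [Equiv.Perm.mul_apply, s_apply]
      split_ifs <;> first | rfl | omega | (congr 1; omega)
    have e4 : (σ * s i * s (i + 1)) i = σ (i + 1) := by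
      simp only [Equiv.Perm.mul_apply, s_apply]
      split_ifs <;> first | rfl | omega | (congr 1; omega)
    split_ifs with hdes
    · have hgt2 : σ (i + 1 + 1) < σ (i + 1) := hdes.2
      have himg2 : (hRiFin i).toFinset.filter (fun u => ∃ v, u = v ++ [i, i + 1])
          = ((hRτFin i).toFinset).image (fun v => v ++ [i, i + 1]) := by
        ext u
        simp only [Finset.mem_filter, Set.Finite.mem_toFinset, Finset.mem_image]
        constructor
        · rintro ⟨hu, v, rfl⟩
          have hu' : Reduced (σ * s i) ((v ++ [i]) ++ [i + 1]) := by simpa [R] using hu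
          obtain ⟨-, hu2⟩ := peel (finInv_mul hfσ) hu'
          obtain ⟨-, hu3⟩ := peel (finInv_mul (finInv_mul hfσ)) hu2
          exact ⟨v, hu3, by simp⟩
        · rintro ⟨v, hv, rfl⟩
          refine ⟨?_, v, rfl⟩
          have r2 : Reduced (σ * s i * s (i + 1)) (v ++ [i]) :=
            appd (finInv_mul (finInv_mul hfσ)) (by rw [e3, e4]; exact hgt2) hv
          have r1 : Reduced (σ * s i) ((v ++ [i]) ++ [i + 1]) :=
            appd (finInv_mul hfσ) (by rw [e2, e1]; exact lt_trans hgt2 hgti) r2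
          simpa [R] using r1
      rw [himg2, Finset.card_image_of_injective _ (List.append_left_injective _)]
    · rw [Finset.card_eq_zero, Finset.eq_empty_iff_forall_notMem]
      intro u hu
      rw [Finset.mem_filter, Set.Finite.mem_toFinset] at hu
      obtain ⟨hu, v, rfl⟩ := hu
      have hu' : Reduced (σ * s i) ((v ++ [i]) ++ [i + 1]) := by simpa [R] using hu
      obtain ⟨hgt2, hu2⟩ := peel (finInv_mul hfσ) hu'
      obtain ⟨hgt3, -⟩ := peel (finInv_mul (finInv_mul hfσ)) hu2
      rw [e3, e4] at hgt3
      exact hdes ⟨by omega, hgt3⟩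
  -- Step C2 : count of reduced words of σ s_i ending in [i, i-1]
  have hcount2 : ∀ i ∈ D,
      ((hRiFin i).toFinset.filter (fun u => ∃ v c, c + 1 = i ∧ u = v ++ [i, c])).card
      = if i - 1 ∈ Des σ then (hRτFin (i - 1)).toFinset.card else 0 := by
    intro i hiD
    obtain ⟨h1i, hgti⟩ := (hmemD i).1 hiD
    obtain ⟨c, rfl⟩ : ∃ c, i = c + 1 := ⟨i - 1, by omega⟩
    simp only [Nat.add_sub_cancel]
    have f1 : (σ * s (c + 1)) (c + 1) = σ (c + 1 + 1) := by
      simp only [Equiv.Perm.mul_apply, s_apply]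
      split_ifs <;> first | rfl | omega | (congr 1; omega)
    have f2 : (σ * s (c + 1)) c = σ c := by
      simp only [Equiv.Perm.mul_apply, s_apply]
      split_ifs <;> first | rfl | omega | (congr 1; omega)
    have f3 : (σ * s (c + 1) * s c) (c + 1 + 1) = σ (c + 1) := by
      simp only [Equiv.Perm.mul_apply, s_apply]
      split_ifs <;> first | rfl | omega | (congr 1; omega)
    have f4 : (σ * s (c + 1) * s c) (c + 1) = σ c := by
      simp only [Equiv.Perm.mul_apply, s_apply]
      split_ifs <;> first | rfl | omega | (congr 1; omega)
    have hbr : σ * s (c + 1) * s c * s (c + 1) = σ * s c * s (c + 1) * s c := by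
      simp only [mul_assoc]
      rw [← mul_assoc (s (c + 1)) (s c) (s (c + 1)), braid_rel c]
      simp only [mul_assoc]
    split_ifs with hdes
    · have hgt2 : σ (c + 1) < σ c := hdes.2
      have himg2 : (hRiFin (c + 1)).toFinset.filter
            (fun u => ∃ v d, d + 1 = c + 1 ∧ u = v ++ [c + 1, d])
          = ((hRτFin c).toFinset).image (fun v => v ++ [c + 1, c]) := by
        ext u
        simp only [Finset.mem_filter, Set.Finite.mem_toFinset, Finset.mem_image]
        constructor
        · rintro ⟨hu, v, d, hd, rfl⟩
          have haa : c = d := by omega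
          subst haa
          have hu' : Reduced (σ * s (c + 1)) ((v ++ [c + 1]) ++ [c]) := by simpa [R] using hu
          obtain ⟨-, hu2⟩ := peel (finInv_mul hfσ) hu'
          obtain ⟨-, hu3⟩ := peel (finInv_mul (finInv_mul hfσ)) hu2
          rw [hbr] at hu3
          exact ⟨v, hu3, by simp⟩
        · rintro ⟨v, hv, rfl⟩
          refine ⟨?_, v, c, rfl, rfl⟩
          rw [← hbr] at hv
          have r2 : Reduced (σ * s (c + 1) * s c) (v ++ [c + 1]) :=
            appd (finInv_mul (finInv_mul hfσ)) (by rw [f3, f4]; exact hgt2) hv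
          have r1 : Reduced (σ * s (c + 1)) ((v ++ [c + 1]) ++ [c]) :=
            appd (finInv_mul hfσ) (by rw [f1, f2]; exact lt_trans hgti hgt2) r2
          simpa [R] using r1
      rw [himg2, Finset.card_image_of_injective _ (List.append_left_injective _)]
    · rw [Finset.card_eq_zero, Finset.eq_empty_iff_forall_notMem]
      intro u hu
      rw [Finset.mem_filter, Set.Finite.mem_toFinset] at hu
      obtain ⟨hu, v, d, hd, rfl⟩ := hu
      have haa : c = d := by omega
      subst haa
      have hu' : Reduced (σ * s (c + 1)) ((v ++ [c + 1]) ++ [c]) := by simpa [R] using hu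
      obtain ⟨hgt2, hu2⟩ := peel (finInv_mul hfσ) hu'
      obtain ⟨hgt3, -⟩ := peel (finInv_mul (finInv_mul hfσ)) hu2
      rw [f3, f4] at hgt3
      have h0' : (σ * s (c + 1)) 0 = 0 := by
        rw [Equiv.Perm.mul_apply, s_apply, if_neg (by omega), if_neg (by omega), h0]
      exact hdes ⟨peel_pos h0' hgt2, hgt3⟩
  -- assemble
  have h1 : (∑ i ∈ D, ((hRiFin i).toFinset.filter (fun u => ∃ v, u = v ++ [i, i + 1])).card)
      = ∑ i ∈ Pr, (hRτFin i).toFinset.card := by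
    rw [Finset.sum_congr rfl hcount1, ← Finset.sum_filter]
    congr 1
    ext i
    rw [Finset.mem_filter, hPr, Set.Finite.mem_toFinset, Set.Finite.mem_toFinset]
    exact Iff.rfl
  have h2 : (∑ i ∈ D, ((hRiFin i).toFinset.filter
        (fun u => ∃ v a, a + 1 = i ∧ u = v ++ [i, a])).card)
      = ∑ i ∈ Pr, (hRτFin i).toFinset.card := by
    rw [Finset.sum_congr rfl hcount2, ← Finset.sum_filter]
    refine Finset.sum_bij' (fun i _ => i - 1) (fun j _ => j + 1) ?_ ?_ ?_ ?_ ?_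
    · intro a ha
      rw [Finset.mem_filter] at ha
      obtain ⟨haD, hQ⟩ := ha
      obtain ⟨h1a, hgta⟩ := (hmemD a).1 haD
      rw [hmemPr]
      refine ⟨hQ, ?_⟩
      have hev : a - 1 + 1 = a := by omega
      rw [hev]
      exact ⟨h1a, hgta⟩
    · intro j hj
      obtain ⟨hjD, hj1D⟩ := (hmemPr j).1 hj
      rw [Finset.mem_filter]
      refine ⟨(hmemD (j + 1)).2 ⟨by omega, hj1D.2⟩, ?_⟩
      simpa using hjD
    · intro a ha
      rw [Finset.mem_filter] at ha
      have := (hmemD a).1 ha.1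
      omega
    · intro j hj
      omega
    · intro a ha
      rfl
  rw [h1, h2]
  omega


end RW
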